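/- arXiv:2207.12778 — 2 statements merged into one kernel-verified Lean document; each statement's English description precedes it below -/
import Mathlib

section
/- If a semigroup X is ideally TzS-closed, then the poset X/⇕ (the semilattice reflection of X) and the poset VE(X) of viable idempotents are well-founded (every nonempty subset has a minimal element). -/
universe u

open Set TopologicalSpace

/-- A topological space is zero-dimensional: it has a base of clopen sets. -/
def HasClopenBasis (Y : Type*) [TopologicalSpace Y] : Prop :=
  ∃ B : Set (Set Y), (∀ s ∈ B, IsClopen s) ∧ IsTopologicalBasis B

section TopClasses

variable (X : Type u) [Semigroup X]

/-- `X` is absolutely `T₁S`-closed: the image of every homomorphism to a `T₁`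
topological semigroup is closed. -/
def AbsolutelyT1SClosed : Prop :=
  ∀ (Y : Type u) [Semigroup Y] [TopologicalSpace Y] [ContinuousMul Y] [T1Space Y]
    (h : X →ₙ* Y), IsClosed (Set.range h)

/-- `X` is absolutely `T₂S`-closed. -/
def AbsolutelyT2SClosed : Prop :=
  ∀ (Y : Type u) [Semigroup Y] [TopologicalSpace Y] [ContinuousMul Y] [T2Space Y]
    (h : X →ₙ* Y), IsClosed (Set.range h)

/-- `X` is absolutely `TzS`-closed. -/
def AbsolutelyTzSClosed : Prop :=
  ∀ (Y : Type u) [Semigroup Y] [TopologicalSpace Y] [ContinuousMul Y] [T1Space Y],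
    HasClopenBasis Y → ∀ (h : X →ₙ* Y), IsClosed (Set.range h)

/-- `X` is `T₁S`-closed: the image of every injective homomorphism to a `T₁`
topological semigroup with discrete image is closed. -/
def T1SClosed : Prop :=
  ∀ (Y : Type u) [Semigroup Y] [TopologicalSpace Y] [ContinuousMul Y] [T1Space Y]
    (h : X →ₙ* Y), Function.Injective h → DiscreteTopology (Set.range h) →
      IsClosed (Set.range h)

/-- `X` is `T₂S`-closed. -/
def T2SClosed : Prop :=
  ∀ (Y : Type u) [Semigroup Y] [TopologicalSpace Y] [ContinuousMul Y] [T2Space Y]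
    (h : X →ₙ* Y), Function.Injective h → DiscreteTopology (Set.range h) →
      IsClosed (Set.range h)

/-- `X` is `TzS`-closed. -/
def TzSClosed : Prop :=
  ∀ (Y : Type u) [Semigroup Y] [TopologicalSpace Y] [ContinuousMul Y] [T1Space Y],
    HasClopenBasis Y → ∀ (h : X →ₙ* Y), Function.Injective h →
      DiscreteTopology (Set.range h) → IsClosed (Set.range h)

/-- `X` is injectively `T₂S`-closed. -/
def InjectivelyT2SClosed : Prop :=
  ∀ (Y : Type u) [Semigroup Y] [TopologicalSpace Y] [ContinuousMul Y] [T2Space Y]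
    (h : X →ₙ* Y), Function.Injective h → IsClosed (Set.range h)

/-- `X` is projectively `T₁S`-closed: all congruence quotients are `T₁S`-closed. -/
def ProjectivelyT1SClosed : Prop := ∀ c : Con X, T1SClosed c.Quotient

/-- `X` is projectively `TzS`-closed. -/
def ProjectivelyTzSClosed : Prop := ∀ c : Con X, TzSClosed c.Quotient

/-- `X` is projectively `T₁S`-discrete: every homomorphism into a `T₁`
topological semigroup has discrete image. -/
def ProjectivelyT1SDiscrete : Prop :=
  ∀ (Y : Type u) [Semigroup Y] [TopologicalSpace Y] [ContinuousMul Y] [T1Space Y]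
    (h : X →ₙ* Y), DiscreteTopology (Set.range h)

/-- `X` is projectively `TzS`-discrete. -/
def ProjectivelyTzSDiscrete : Prop :=
  ∀ (Y : Type u) [Semigroup Y] [TopologicalSpace Y] [ContinuousMul Y] [T1Space Y],
    HasClopenBasis Y → ∀ (h : X →ₙ* Y), DiscreteTopology (Set.range h)

end TopClasses

/-- `spow x n` is the power `x^(n+1)` in a semigroup; thus as `n` ranges over `ℕ`,
`spow x n` ranges over all powers `x^m`, `m ≥ 1`. -/
def spow {X : Type*} [Semigroup X] (x : X) : ℕ → X
  | 0 => x
  | n + 1 => spow x n * x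

section AlgDefs

variable (X : Type*) [Semigroup X]

/-- the set `E(X)` of idempotents. -/
def idemSet : Set X := {x | x * x = x}

/-- `H_e`, the maximal subgroup containing the idempotent `e`. -/
def maxSubgroup (e : X) : Set X :=
  {x | x * e = x ∧ e * x = x ∧ ∃ y, y * e = y ∧ e * y = y ∧ x * y = e ∧ y * x = e}

/-- The Clifford part `H(X) = ⋃_{e ∈ E(X)} H_e`. -/
def cliffordPart : Set X := ⋃ e ∈ idemSet X, maxSubgroup X e

/-- `H_e/e := {x : xe = ex ∈ H_e}`. -/
def HeCoideal (e : X) : Set X := {x | x * e = e * x ∧ x * e ∈ maxSubgroup X e}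

/-- `I` is an ideal of the semigroup `X`. -/
def IsIdealSet (I : Set X) : Prop := ∀ x ∈ I, ∀ y : X, x * y ∈ I ∧ y * x ∈ I

/-- The set `VE(X)` of viable idempotents: `e` is idempotent and `X ∖ (H_e/e)` is an ideal. -/
def viableIdems : Set X := {e | e ∈ idemSet X ∧ IsIdealSet X (Set.univ \ HeCoideal X e)}

/-- The center `Z(X)`. -/
def centerSet : Set X := {z | ∀ x, z * x = x * z}

/-- `√A = {x : xⁿ ∈ A for some n ≥ 1}`. -/
def sqrtSet (A : Set X) : Set X := {x | ∃ n : ℕ, spow x n ∈ A}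

/-- A subset `B ⊆ X` is bounded: there is `n ≥ 1` with `xⁿ` idempotent for all `x ∈ B`. -/
def BoundedSet (B : Set X) : Prop := ∃ n : ℕ, ∀ x ∈ B, spow x n ∈ idemSet X

/-- The semigroup `X` is bounded. -/
def BoundedSemigroup : Prop := ∃ n : ℕ, ∀ x : X, spow x n ∈ idemSet X

/-- `X` is chain-finite. -/
def ChainFinite : Prop :=
  ∀ I : Set X, I.Infinite → ∃ x ∈ I, ∃ y ∈ I, x * y ≠ x ∧ x * y ≠ y

/-- `G ⊆ X` is a subgroup of the semigroup `X`. -/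
def IsSubgroupSet (G : Set X) : Prop :=
  (∀ x ∈ G, ∀ y ∈ G, x * y ∈ G) ∧
    ∃ e ∈ G, (∀ x ∈ G, x * e = x ∧ e * x = x) ∧ ∀ x ∈ G, ∃ y ∈ G, x * y = e ∧ y * x = e

/-- `X` is group-finite: all its subgroups are finite. -/
def GroupFinite : Prop := ∀ G : Set X, IsSubgroupSet X G → G.Finite

/-- `X` is Clifford+finite: `X ∖ H(X)` is finite. -/
def CliffordPlusFinite : Prop := (Set.univ \ cliffordPart X).Finite

/-- `X` is `E`-commutative: idempotents commute. -/
def ECommutative : Prop := ∀ x ∈ idemSet X, ∀ y ∈ idemSet X, x * y = y * x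

end AlgDefs

/-- The Rees congruence associated with an ideal `I` of `X`. -/
def ReesCon {X : Type*} [Semigroup X] (I : Set X) (hI : IsIdealSet X I) : Con X where
  r x y := x = y ∨ (x ∈ I ∧ y ∈ I)
  iseqv :=
    { refl := fun _ => Or.inl rfl
      symm := by rintro x y (rfl | ⟨h1, h2⟩); exacts [Or.inl rfl, Or.inr ⟨h2, h1⟩]
      trans := by
        rintro x y z (rfl | ⟨h1, h2⟩) (rfl | ⟨h3, h4⟩)
        exacts [Or.inl rfl, Or.inr ⟨h3, h4⟩, Or.inr ⟨h1, h2⟩, Or.inr ⟨h1, h4⟩] }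
  mul' := by
    rintro a b c d (rfl | ⟨h1, h2⟩) (rfl | ⟨h3, h4⟩)
    · exact Or.inl rfl
    · exact Or.inr ⟨(hI c h3 a).2, (hI d h4 a).2⟩
    · exact Or.inr ⟨(hI a h1 c).1, (hI b h2 c).1⟩
    · exact Or.inr ⟨(hI a h1 c).1, (hI b h2 d).1⟩

/-- `X` is ideally `T₂S`-closed: all its Rees quotients are `T₂S`-closed. -/
def IdeallyT2SClosed (X : Type u) [Semigroup X] : Prop :=
  ∀ (I : Set X) (hI : IsIdealSet X I), T2SClosed (ReesCon I hI).Quotient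

/-- `X` is ideally `TzS`-closed. -/
def IdeallyTzSClosed (X : Type u) [Semigroup X] : Prop :=
  ∀ (I : Set X) (hI : IsIdealSet X I), TzSClosed (ReesCon I hI).Quotient

/-- A congruence is a semilattice congruence if its quotient is a commutative
semigroup of idempotents. -/
def IsSemilatticeCon {X : Type*} [Semigroup X] (c : Con X) : Prop :=
  (∀ a b : c.Quotient, a * b = b * a) ∧ ∀ a : c.Quotient, a * a = a

/-- The smallest semilattice congruence `⇕` on `X`, the intersection of all
semilattice congruences. -/
def slCon (X : Type*) [Semigroup X] : Con X := sInf {c | IsSemilatticeCon c}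

theorem centerSet_mul_mem {X : Type*} [Semigroup X] {a b : X}
    (ha : a ∈ centerSet X) (hb : b ∈ centerSet X) : a * b ∈ centerSet X := fun t => by
  rw [mul_assoc, hb t, ← mul_assoc, ha t, mul_assoc]

/-- The ideal center `IZ(X) = {z ∈ Z(X) : zX ⊆ Z(X)}`, as a subsemigroup of `X`. -/
def idealCenter (X : Type*) [Semigroup X] : Subsemigroup X where
  carrier := {z | z ∈ centerSet X ∧ ∀ x : X, z * x ∈ centerSet X}
  mul_mem' := by
    rintro a b ⟨ha, ha'⟩ ⟨hb, hb'⟩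
    refine ⟨centerSet_mul_mem ha hb, fun x => ?_⟩
    have h : a * b * x = a * (b * x) := mul_assoc a b x
    rw [h]
    exact centerSet_mul_mem ha (hb' x)

/-- Evaluation of the semigroup polynomial with coefficients `a, l = [a₁, …, aₙ]`:
`x ↦ a * x * a₁ * x * ⋯ * x * aₙ` (computed in `X¹ = WithOne X`). -/
def polyEval {X : Type*} [Semigroup X] (a : WithOne X) (l : List (WithOne X)) (x : X) :
    WithOne X :=
  l.foldl (fun acc b => acc * (x : WithOne X) * b) a

/-- `f : X → X¹` is a semigroup polynomial of degree `d ≥ 1`. -/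
def IsSemigroupPolynomial {X : Type*} [Semigroup X] (f : X → WithOne X) (d : ℕ) : Prop :=
  1 ≤ d ∧ ∃ (a : WithOne X) (l : List (WithOne X)), l.length = d ∧ ∀ x, f x = polyEval a l x

/-- `X` is polybounded. -/
def Polybounded (X : Type*) [Semigroup X] : Prop :=
  ∃ (k : ℕ) (f : Fin k → X → WithOne X) (d : Fin k → ℕ) (b : Fin k → X),
    (∀ i, IsSemigroupPolynomial (f i) (d i)) ∧ ∀ x : X, ∃ i, f i x = (b i : WithOne X)

/-- `X` is polyfinite. -/
def Polyfinite (X : Type*) [Semigroup X] : Prop :=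
  ∃ (d : ℕ) (F : Set X), F.Finite ∧ ∀ x y : X,
    ∃ (f : X → WithOne X) (m : ℕ), m ≤ d ∧ IsSemigroupPolynomial f m ∧
      (∃ u ∈ F, f x = (u : WithOne X)) ∧ ∃ v ∈ F, f y = (v : WithOne X)

/-- `X` is `B`-centrobounded over `B ⊆ E(X)`: there is `n ≥ 1` such that for every
`e ∈ B` and all `x, y ∈ ⋂_{a ∈ B} H_a/a`, if `w` is the inverse of `y*e` in the group
`H_e` and `(x*e)*w ∈ H_e ∩ Z(X)`, then `((x*e)*w)ⁿ` is an idempotent. -/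
def Centrobounded {X : Type*} [Semigroup X] (B : Set X) : Prop :=
  ∃ n : ℕ, ∀ e ∈ B, ∀ x ∈ ⋂ a ∈ B, HeCoideal X a, ∀ y ∈ ⋂ a ∈ B, HeCoideal X a,
    ∀ w ∈ maxSubgroup X e, (y * e) * w = e → w * (y * e) = e →
      (x * e) * w ∈ maxSubgroup X e → (x * e) * w ∈ centerSet X →
        spow ((x * e) * w) n ∈ idemSet X

/-- `B` is an antichain in the natural partial order `e ≤ f ⇔ ef = fe = e` on idempotents. -/
def IsIdemAntichain {X : Type*} [Semigroup X] (B : Set X) : Prop :=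
  ∀ e ∈ B, ∀ f ∈ B, e ≠ f → ¬(e * f = e ∧ f * e = e) ∧ ¬(e * f = f ∧ f * e = f)

section St9Aux

variable {X : Type u} [Semigroup X]

/-- The ideal of elements belonging to no `D n`. -/
def st9I (D : ℕ → Set X) : Set X := {x | ∀ n, x ∉ D n}

theorem st9I_ideal (D : ℕ → Set X)
    (hA : ∀ n (x y : X), x * y ∈ D n ↔ x ∈ D n ∧ y ∈ D n) :
    IsIdealSet X (st9I D) :=
  fun x hx y => ⟨fun n h => hx n ((hA n x y).1 h).1, fun n h => hx n ((hA n y x).1 h).2⟩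

theorem st9notI_iff (D : ℕ → Set X) {x : X} : x ∉ st9I D ↔ ∃ n, x ∈ D n := by
  simp [st9I]

variable (D : ℕ → Set X) (hA : ∀ n (x y : X), x * y ∈ D n ↔ x ∈ D n ∧ y ∈ D n)

/-- The Rees quotient by `st9I D`. -/
abbrev st9Q : Type u := (ReesCon (st9I D) (st9I_ideal D hA)).Quotient

theorem st9mk_eq {x y : X} :
    (x : st9Q D hA) = (y : st9Q D hA) ↔ (x = y ∨ (x ∈ st9I D ∧ y ∈ st9I D)) :=
  Con.eq _

theorem st9exists_rep (a : st9Q D hA) : ∃ x : X, (x : st9Q D hA) = a :=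
  Con.induction_on a fun x => ⟨x, rfl⟩

/-- `a` is the zero class. -/
def st9isZ (a : st9Q D hA) : Prop := ∃ i, i ∈ st9I D ∧ (i : st9Q D hA) = a

theorem st9isZ_coe {x : X} : st9isZ D hA (x : st9Q D hA) ↔ x ∈ st9I D := by
  constructor
  · rintro ⟨i, hi, he⟩
    rcases (st9mk_eq D hA).1 he with rfl | ⟨_, h⟩
    · exact hi
    · exact h
  · intro h; exact ⟨x, h, rfl⟩

theorem st9zmul_left {a : st9Q D hA} (h : st9isZ D hA a) (b : st9Q D hA) : a * b = a := by
  obtain ⟨i, hi, rfl⟩ := h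
  refine Con.induction_on b fun y => ?_
  rw [← Con.coe_mul]
  exact (st9mk_eq D hA).2 (Or.inr ⟨(st9I_ideal D hA i hi y).1, hi⟩)

theorem st9zmul_right {a : st9Q D hA} (h : st9isZ D hA a) (b : st9Q D hA) : b * a = a := by
  obtain ⟨i, hi, rfl⟩ := h
  refine Con.induction_on b fun y => ?_
  rw [← Con.coe_mul]
  exact (st9mk_eq D hA).2 (Or.inr ⟨(st9I_ideal D hA i hi y).2, hi⟩)

/-- Witness predicate: `a` is a non-zero class avoiding `D n` for all `n < m`. -/
def st9Good (m : ℕ) (a : st9Q D hA) : Prop :=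
  ∃ x : X, (x : st9Q D hA) = a ∧ x ∉ st9I D ∧ ∀ n < m, x ∉ D n

theorem st9good_mono {m m' : ℕ} (h : m' ≤ m) {a : st9Q D hA}
    (ha : st9Good D hA m a) : st9Good D hA m' a := by
  obtain ⟨x, h1, h2, h3⟩ := ha
  exact ⟨x, h1, h2, fun n hn => h3 n (lt_of_lt_of_le hn h)⟩

theorem st9good_notZ {m : ℕ} {a : st9Q D hA} (ha : st9Good D hA m a) :
    ¬ st9isZ D hA a := by
  obtain ⟨x, rfl, h2, _⟩ := ha
  intro hz
  exact h2 ((st9isZ_coe D hA).1 hz)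

theorem st9good0_of_notZ {a : st9Q D hA} (h : ¬ st9isZ D hA a) : st9Good D hA 0 a := by
  obtain ⟨x, rfl⟩ := st9exists_rep D hA a
  exact ⟨x, rfl, fun hx => h ((st9isZ_coe D hA).2 hx), fun n hn => absurd hn (Nat.not_lt_zero n)⟩

include hA in
theorem st9mul_notI (hB : ∀ n m, n ≤ m → D n ⊆ D m) {x y : X}
    (hx : x ∉ st9I D) (hy : y ∉ st9I D) : x * y ∉ st9I D := by
  obtain ⟨k, hk⟩ := (st9notI_iff D).1 hx
  obtain ⟨l, hl⟩ := (st9notI_iff D).1 hy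
  exact (st9notI_iff D).2 ⟨max k l,
    (hA _ x y).2 ⟨hB k _ (le_max_left k l) hk, hB l _ (le_max_right k l) hl⟩⟩

theorem st9good_mul (hB : ∀ n m, n ≤ m → D n ⊆ D m) {m : ℕ} {a b : st9Q D hA}
    (ha : st9Good D hA m a) (hb : st9Good D hA 0 b) : st9Good D hA m (a * b) := by
  obtain ⟨x, hx1, hx2, hx3⟩ := ha
  obtain ⟨y, hy1, hy2, _⟩ := hb
  refine ⟨x * y, by rw [Con.coe_mul, hx1, hy1], st9mul_notI D hA hB hx2 hy2, ?_⟩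
  intro n hn hmem
  exact hx3 n hn ((hA n x y).1 hmem).1

theorem st9good_mul' (hB : ∀ n m, n ≤ m → D n ⊆ D m) {m : ℕ} {a b : st9Q D hA}
    (ha : st9Good D hA 0 a) (hb : st9Good D hA m b) : st9Good D hA m (a * b) := by
  obtain ⟨x, hx1, hx2, _⟩ := ha
  obtain ⟨y, hy1, hy2, hy3⟩ := hb
  refine ⟨x * y, by rw [Con.coe_mul, hx1, hy1], st9mul_notI D hA hB hx2 hy2, ?_⟩
  intro n hn hmem
  exact hy3 n hn ((hA n x y).1 hmem).2

theorem st9notZ_mul (hB : ∀ n m, n ≤ m → D n ⊆ D m) {a b : st9Q D hA}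
    (ha : ¬ st9isZ D hA a) (hb : ¬ st9isZ D hA b) : ¬ st9isZ D hA (a * b) :=
  st9good_notZ D hA (st9good_mul D hA hB (st9good0_of_notZ D hA ha) (st9good0_of_notZ D hA hb))

theorem st9isZ_mul_left {a b : st9Q D hA} (h : st9isZ D hA a) : st9isZ D hA (a * b) := by
  rw [st9zmul_left D hA h b]; exact h

theorem st9isZ_mul_right {a b : st9Q D hA} (h : st9isZ D hA b) : st9isZ D hA (a * b) := by
  rw [st9zmul_right D hA h a]; exact h

open Classical in
/-- Multiplication on `Option (st9Q D hA)`: `none` is a new absorbing element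
except that the old zero class still absorbs it. -/
noncomputable def st9mul : Option (st9Q D hA) → Option (st9Q D hA) → Option (st9Q D hA)
  | some a, some b => some (a * b)
  | some a, none => if st9isZ D hA a then some a else none
  | none, some b => if st9isZ D hA b then some b else none
  | none, none => none

theorem st9mul_ss (a b : st9Q D hA) :
    st9mul D hA (some a) (some b) = some (a * b) := rfl

open Classical in
theorem st9mul_sn (a : st9Q D hA) :
    st9mul D hA (some a) none = if st9isZ D hA a then some a else none := rfl

open Classical in
theorem st9mul_ns (b : st9Q D hA) :
    st9mul D hA none (some b) = if st9isZ D hA b then some b else none := rfl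

theorem st9mul_nn : st9mul D hA none none = none := rfl

open Classical in
theorem st9mul_sn_pos {a : st9Q D hA} (h : st9isZ D hA a) :
    st9mul D hA (some a) none = some a := by rw [st9mul_sn, if_pos h]

open Classical in
theorem st9mul_sn_neg {a : st9Q D hA} (h : ¬ st9isZ D hA a) :
    st9mul D hA (some a) none = none := by rw [st9mul_sn, if_neg h]

open Classical in
theorem st9mul_ns_pos {b : st9Q D hA} (h : st9isZ D hA b) :
    st9mul D hA none (some b) = some b := by rw [st9mul_ns, if_pos h]

open Classical in
theorem st9mul_ns_neg {b : st9Q D hA} (h : ¬ st9isZ D hA b) :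
    st9mul D hA none (some b) = none := by rw [st9mul_ns, if_neg h]

theorem st9mul_assoc (hB : ∀ n m, n ≤ m → D n ⊆ D m) :
    ∀ u v w, st9mul D hA (st9mul D hA u v) w = st9mul D hA u (st9mul D hA v w) := by
  rintro (_ | a) (_ | b) (_ | c)
  · rfl
  · by_cases hc : st9isZ D hA c
    · simp only [st9mul_nn, st9mul_ns_pos D hA hc]
    · simp only [st9mul_nn, st9mul_ns_neg D hA hc]
  · by_cases hb : st9isZ D hA b
    · simp only [st9mul_ns_pos D hA hb, st9mul_sn_pos D hA hb]
    · simp only [st9mul_ns_neg D hA hb, st9mul_sn_neg D hA hb, st9mul_nn]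
  · by_cases hb : st9isZ D hA b
    · simp only [st9mul_ns_pos D hA hb, st9mul_ss,
        st9mul_ns_pos D hA (st9isZ_mul_left D hA (b := c) hb)]
    · by_cases hc : st9isZ D hA c
      · simp only [st9mul_ns_neg D hA hb, st9mul_ss, st9mul_ns_pos D hA hc,
          st9mul_ns_pos D hA (st9isZ_mul_right D hA (a := b) hc),
          st9zmul_right D hA hc b]
      · simp only [st9mul_ns_neg D hA hb, st9mul_ss, st9mul_ns_neg D hA hc, st9mul_nn,
          st9mul_ns_neg D hA (st9notZ_mul D hA hB hb hc)]
  · by_cases ha : st9isZ D hA a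
    · simp only [st9mul_nn, st9mul_sn_pos D hA ha]
    · simp only [st9mul_nn, st9mul_sn_neg D hA ha]
  · by_cases ha : st9isZ D hA a
    · by_cases hc : st9isZ D hA c
      · simp only [st9mul_sn_pos D hA ha, st9mul_ns_pos D hA hc]
      · simp only [st9mul_sn_pos D hA ha, st9mul_ns_neg D hA hc, st9mul_ss,
          st9zmul_left D hA ha c]
    · by_cases hc : st9isZ D hA c
      · simp only [st9mul_sn_neg D hA ha, st9mul_ns_pos D hA hc, st9mul_ss,
          st9zmul_right D hA hc a]
      · simp only [st9mul_sn_neg D hA ha, st9mul_ns_neg D hA hc, st9mul_nn]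
  · by_cases hb : st9isZ D hA b
    · simp only [st9mul_ss, st9mul_sn_pos D hA hb,
        st9mul_sn_pos D hA (st9isZ_mul_right D hA (a := a) hb)]
    · by_cases ha : st9isZ D hA a
      · simp only [st9mul_ss, st9mul_sn_neg D hA hb, st9mul_sn_pos D hA ha,
          st9mul_sn_pos D hA (st9isZ_mul_left D hA (b := b) ha),
          st9zmul_left D hA ha b]
      · simp only [st9mul_ss, st9mul_sn_neg D hA hb, st9mul_sn_neg D hA ha,
          st9mul_sn_neg D hA (st9notZ_mul D hA hB ha hb)]
  · simp only [st9mul_ss, mul_assoc]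


/-- The semigroup structure on `Option (st9Q D hA)`. -/
noncomputable def st9Sem (hB : ∀ n m, n ≤ m → D n ⊆ D m) :
    Semigroup (Option (st9Q D hA)) where
  mul := st9mul D hA
  mul_assoc := st9mul_assoc D hA hB

/-- Neighborhood filter predicate at `none`. -/
def st9P (m : ℕ) (y : Option (st9Q D hA)) : Prop :=
  ∀ a, y = some a → st9Good D hA m a

theorem st9P_none (m : ℕ) : st9P D hA m none := fun _ h => nomatch h

theorem st9P_mono {m m' : ℕ} (h : m' ≤ m) {y : Option (st9Q D hA)}
    (hy : st9P D hA m y) : st9P D hA m' y :=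
  fun a ha => st9good_mono D hA h (hy a ha)

theorem st9P_mul (hB : ∀ n m, n ≤ m → D n ⊆ D m) {m : ℕ} {y y' : Option (st9Q D hA)}
    (h : st9P D hA m y) (h' : st9P D hA 0 y') : st9P D hA m (st9mul D hA y y') := by
  match y, y' with
  | some a, some b =>
    intro c hc
    rw [st9mul_ss] at hc
    exact (Option.some.inj hc) ▸ st9good_mul D hA hB (h a rfl) (h' b rfl)
  | some a, none =>
    rw [st9mul_sn_neg D hA (st9good_notZ D hA (h a rfl))]
    exact st9P_none D hA m
  | none, some b =>
    rw [st9mul_ns_neg D hA (st9good_notZ D hA (h' b rfl))]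
    exact st9P_none D hA m
  | none, none => exact st9P_none D hA m

theorem st9P_mul' (hB : ∀ n m, n ≤ m → D n ⊆ D m) {m : ℕ} {y y' : Option (st9Q D hA)}
    (h : st9P D hA 0 y) (h' : st9P D hA m y') : st9P D hA m (st9mul D hA y y') := by
  match y, y' with
  | some a, some b =>
    intro c hc
    rw [st9mul_ss] at hc
    exact (Option.some.inj hc) ▸ st9good_mul' D hA hB (h a rfl) (h' b rfl)
  | some a, none =>
    rw [st9mul_sn_neg D hA (st9good_notZ D hA (h a rfl))]
    exact st9P_none D hA m
  | none, some b =>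
    rw [st9mul_ns_neg D hA (st9good_notZ D hA (h' b rfl))]
    exact st9P_none D hA m
  | none, none => exact st9P_none D hA m

/-- The topology on `Option (st9Q D hA)`: all `some` points are isolated,
`none` has the `st9P m` sets as a neighborhood base. -/
def st9Top : TopologicalSpace (Option (st9Q D hA)) where
  IsOpen U := none ∈ U → ∃ m, ∀ y, st9P D hA m y → y ∈ U
  isOpen_univ := fun _ => ⟨0, fun _ _ => trivial⟩
  isOpen_inter := by
    intro U V hU hV h
    obtain ⟨m1, h1⟩ := hU h.1
    obtain ⟨m2, h2⟩ := hV h.2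
    exact ⟨max m1 m2, fun y hy =>
      ⟨h1 y (st9P_mono D hA (le_max_left m1 m2) hy),
       h2 y (st9P_mono D hA (le_max_right m1 m2) hy)⟩⟩
  isOpen_sUnion := by
    intro S hS h
    obtain ⟨U, hU, hnU⟩ := Set.mem_sUnion.1 h
    obtain ⟨m, hm⟩ := hS U hU hnU
    exact ⟨m, fun y hy => Set.mem_sUnion.2 ⟨U, hU, hm y hy⟩⟩

/-- The main contradiction: if `D` is an increasing sequence of "prime" subsets with
witnesses separating the levels, then the Rees quotient by `st9I D` is not `TzS`-closed. -/
theorem st9contra (hB : ∀ n m, n ≤ m → D n ⊆ D m)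
    (hW : ∀ m, ∃ x ∈ D m, ∀ n < m, x ∉ D n)
    (hX : TzSClosed (st9Q D hA)) : False := by
  classical
  letI sem : Semigroup (Option (st9Q D hA)) := st9Sem D hA hB
  letI top : TopologicalSpace (Option (st9Q D hA)) := st9Top D hA
  have hmul_def : ∀ u v : Option (st9Q D hA), u * v = st9mul D hA u v := fun _ _ => rfl
  have hopen_iff : ∀ U : Set (Option (st9Q D hA)),
      IsOpen U ↔ (none ∈ U → ∃ m, ∀ y, st9P D hA m y → y ∈ U) := fun _ => Iff.rfl
  -- basic open sets
  have hW_open : ∀ m, IsOpen {y | st9P D hA m y} :=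
    fun m => (hopen_iff _).2 fun _ => ⟨m, fun _ hy => hy⟩
  have hW_mem : ∀ m, (none : Option (st9Q D hA)) ∈ {y | st9P D hA m y} :=
    fun m => st9P_none D hA m
  have hsingle_open : ∀ a : st9Q D hA, IsOpen ({some a} : Set (Option (st9Q D hA))) :=
    fun a => (hopen_iff _).2 fun h => absurd h (by simp)
  have hnotgood : ∀ a : st9Q D hA, ∃ m, ¬ st9Good D hA m a := by
    intro a
    by_cases hz : st9isZ D hA a
    · exact ⟨0, fun hg => st9good_notZ D hA hg hz⟩
    · obtain ⟨x₀, hx₀, hx₀I, -⟩ := st9good0_of_notZ D hA hz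
      obtain ⟨k, hk⟩ := (st9notI_iff D).1 hx₀I
      refine ⟨k + 1, ?_⟩
      rintro ⟨x, hxa, hxI, hxn⟩
      rcases (st9mk_eq D hA).1 (hxa.trans hx₀.symm) with rfl | ⟨hc, -⟩
      · exact hxn k (Nat.lt_succ_self k) hk
      · exact hxI hc
  have hsingle_closed : ∀ a : st9Q D hA, IsClosed ({some a} : Set (Option (st9Q D hA))) := by
    intro a
    rw [← isOpen_compl_iff, hopen_iff]
    intro _
    obtain ⟨m, hm⟩ := hnotgood a
    exact ⟨m, fun y hy hmem => hm (hy a (Set.eq_of_mem_singleton hmem))⟩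
  haveI : T1Space (Option (st9Q D hA)) := by
    refine ⟨fun y => ?_⟩
    match y with
    | some a => exact hsingle_closed a
    | none =>
      rw [← isOpen_compl_iff, hopen_iff]
      intro h
      exact absurd rfl h
  have hclopen : HasClopenBasis (Option (st9Q D hA)) := by
    refine ⟨{U | IsClopen U}, fun s hs => hs, ?_⟩
    refine TopologicalSpace.isTopologicalBasis_of_isOpen_of_nhds (fun u hu => hu.isOpen) ?_
    intro y u hyu hu
    match y with
    | some a =>
      exact ⟨{some a}, ⟨hsingle_closed a, hsingle_open a⟩, rfl,
        Set.singleton_subset_iff.2 hyu⟩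
    | none =>
      obtain ⟨m, hm⟩ := (hopen_iff u).1 hu hyu
      refine ⟨{y | st9P D hA m y}, ⟨?_, hW_open m⟩, hW_mem m, fun y hy => hm y hy⟩
      rw [← isOpen_compl_iff, hopen_iff]
      intro hc
      exact absurd (hW_mem m) hc
  haveI : ContinuousMul (Option (st9Q D hA)) := by
    refine ⟨continuous_iff_continuousAt.2 ?_⟩
    rintro ⟨u, v⟩
    rw [ContinuousAt, Filter.tendsto_def]
    intro s hs
    rw [nhds_prod_eq, Filter.mem_prod_iff]
    obtain ⟨t, hts, hto, hwt⟩ := mem_nhds_iff.1 hs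
    -- helper: membership facts for nhds
    have hmemW : ∀ m, {y | st9P D hA m y} ∈ nhds (none : Option (st9Q D hA)) :=
      fun m => (hW_open m).mem_nhds (hW_mem m)
    have hmemS : ∀ a : st9Q D hA, ({some a} : Set (Option (st9Q D hA))) ∈ nhds (some a) :=
      fun a => (hsingle_open a).mem_nhds rfl
    match u, v with
    | some a, some b =>
      refine ⟨{some a}, hmemS a, {some b}, hmemS b, ?_⟩
      rintro ⟨y, y'⟩ ⟨hy, hy'⟩
      simp only [Set.mem_singleton_iff] at hy hy'
      subst hy; subst hy'
      exact hts hwt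
    | none, some b =>
      by_cases hb : st9isZ D hA b
      · -- product is `some b`
        have hprod : (none : Option (st9Q D hA)) * some b = some b := st9mul_ns_pos D hA hb
        rw [hprod] at hwt
        refine ⟨{y | st9P D hA 0 y}, hmemW 0, {some b}, hmemS b, ?_⟩
        rintro ⟨y, y'⟩ ⟨hy, hy'⟩
        simp only [Set.mem_singleton_iff] at hy'
        subst hy'
        apply hts
        match y, hy with
        | none, _ =>
          show st9mul D hA none (some b) ∈ t
          rw [st9mul_ns_pos D hA hb]; exact hwt
        | some c, hy =>
          show st9mul D hA (some c) (some b) ∈ t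
          rw [st9mul_ss, st9zmul_right D hA hb c]
          exact hwt
      · -- product is `none`
        have hprod : (none : Option (st9Q D hA)) * some b = none := st9mul_ns_neg D hA hb
        rw [hprod] at hwt
        obtain ⟨m, hm⟩ := (hopen_iff t).1 hto hwt
        refine ⟨{y | st9P D hA m y}, hmemW m, {some b}, hmemS b, ?_⟩
        rintro ⟨y, y'⟩ ⟨hy, hy'⟩
        simp only [Set.mem_singleton_iff] at hy'
        subst hy'
        have hb0 : st9P D hA 0 (some b) := fun c hc =>
          (Option.some.inj hc) ▸ st9good0_of_notZ D hA hb
        exact hts (hm _ (st9P_mul D hA hB hy hb0))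
    | some a, none =>
      by_cases ha : st9isZ D hA a
      · have hprod : some a * (none : Option (st9Q D hA)) = some a := st9mul_sn_pos D hA ha
        rw [hprod] at hwt
        refine ⟨{some a}, hmemS a, {y | st9P D hA 0 y}, hmemW 0, ?_⟩
        rintro ⟨y, y'⟩ ⟨hy, hy'⟩
        simp only [Set.mem_singleton_iff] at hy
        subst hy
        apply hts
        match y', hy' with
        | none, _ =>
          show st9mul D hA (some a) none ∈ t
          rw [st9mul_sn_pos D hA ha]; exact hwt
        | some c, hy' =>
          show st9mul D hA (some a) (some c) ∈ t
          rw [st9mul_ss, st9zmul_left D hA ha c]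
          exact hwt
      · have hprod : some a * (none : Option (st9Q D hA)) = none := st9mul_sn_neg D hA ha
        rw [hprod] at hwt
        obtain ⟨m, hm⟩ := (hopen_iff t).1 hto hwt
        refine ⟨{some a}, hmemS a, {y | st9P D hA m y}, hmemW m, ?_⟩
        rintro ⟨y, y'⟩ ⟨hy, hy'⟩
        simp only [Set.mem_singleton_iff] at hy
        subst hy
        have ha0 : st9P D hA 0 (some a) := fun c hc =>
          (Option.some.inj hc) ▸ st9good0_of_notZ D hA ha
        exact hts (hm _ (st9P_mul' D hA hB ha0 hy'))
    | none, none =>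
      have hprod : (none : Option (st9Q D hA)) * none = none := rfl
      rw [hprod] at hwt
      obtain ⟨m, hm⟩ := (hopen_iff t).1 hto hwt
      refine ⟨{y | st9P D hA m y}, hmemW m, {y | st9P D hA 0 y}, hmemW 0, ?_⟩
      rintro ⟨y, y'⟩ ⟨hy, hy'⟩
      exact hts (hm _ (st9P_mul D hA hB hy hy'))
  -- the embedding
  let h : st9Q D hA →ₙ* Option (st9Q D hA) :=
    { toFun := some, map_mul' := fun a b => rfl }
  have hinj : Function.Injective h := fun a b hab => Option.some.inj hab
  have hrange : Set.range h = {y : Option (st9Q D hA) | y ≠ none} := by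
    ext y
    match y with
    | none => simp [h]
    | some a => simp [h]; exact ⟨a, rfl⟩
  haveI hdisc : DiscreteTopology (Set.range h) := by
    rw [discreteTopology_iff_isOpen_singleton]
    rintro ⟨y, hy⟩
    have heq : ({⟨y, hy⟩} : Set (Set.range h)) = Subtype.val ⁻¹' {y} := by
      ext w
      simp [Subtype.ext_iff]
    rw [heq]
    obtain ⟨a, ha⟩ := hy
    have hya : y = some a := ha.symm
    rw [hya]
    exact (hsingle_open a).preimage continuous_subtype_val
  have hclosed := hX (Option (st9Q D hA)) hclopen h hinj hdisc
  have hlim : (none : Option (st9Q D hA)) ∈ closure (Set.range h) := by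
    rw [mem_closure_iff]
    intro U hU hnU
    obtain ⟨m, hm⟩ := (hopen_iff U).1 hU hnU
    obtain ⟨x, hxm, hxn⟩ := hW m
    refine ⟨some (x : st9Q D hA), hm _ ?_, x, rfl⟩
    intro c hc
    refine (Option.some.inj hc) ▸ ⟨x, rfl, (st9notI_iff D).2 ⟨m, hxm⟩, hxn⟩
  rw [hclosed.closure_eq, hrange] at hlim
  exact hlim rfl


theorem st9slCon_comm (x y : X) : slCon X (x * y) (y * x) := fun c hc => by
  have := hc.1 (x : c.Quotient) (y : c.Quotient)
  rw [← Con.coe_mul, ← Con.coe_mul] at this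
  exact (Con.eq _).1 this

theorem st9slCon_idem (x : X) : slCon X (x * x) x := fun c hc => by
  have := hc.2 (x : c.Quotient)
  rw [← Con.coe_mul] at this
  exact (Con.eq _).1 this

theorem st9L_comm (u v : (slCon X).Quotient) : u * v = v * u := by
  refine Con.induction_on₂ u v fun x y => ?_
  rw [← Con.coe_mul, ← Con.coe_mul]
  exact (Con.eq _).2 (st9slCon_comm x y)

theorem st9L_idem (u : (slCon X).Quotient) : u * u = u := by
  refine Con.induction_on u fun x => ?_
  rw [← Con.coe_mul]
  exact (Con.eq _).2 (st9slCon_idem x)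

theorem st9L_trans {u v w : (slCon X).Quotient} (h1 : u * v = u) (h2 : v * w = v) :
    u * w = u := by
  conv_lhs => rw [← h1, mul_assoc, h2]
  exact h1

theorem st9L_anti {u v : (slCon X).Quotient} (h1 : u * v = u) (h2 : v * u = v) :
    u = v := by
  rw [← h1, st9L_comm]
  exact h2

theorem st9L_meet {b u v : (slCon X).Quotient} :
    b * (u * v) = b ↔ (b * u = b ∧ b * v = b) := by
  constructor
  · intro h
    constructor
    · have : b * (u * v) * u = b * (u * v) := by
        rw [mul_assoc b (u * v) u, mul_assoc u v u, st9L_comm v u, ← mul_assoc u u v,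
          st9L_idem u]
      rw [h] at this
      exact this
    · have : b * (u * v) * v = b * (u * v) := by
        rw [mul_assoc b (u * v) v, mul_assoc u v v, st9L_idem v]
      rw [h] at this
      exact this
  · rintro ⟨h1, h2⟩
    rw [← mul_assoc, h1, h2]

theorem st9H_self {e : X} (he : e * e = e) : e ∈ maxSubgroup X e :=
  ⟨he, he, e, he, he, he, he⟩

theorem st9H_mul {e g h : X} (hg : g ∈ maxSubgroup X e) (hh : h ∈ maxSubgroup X e) :
    g * h ∈ maxSubgroup X e := by
  obtain ⟨hg1, hg2, y, hy1, hy2, hy3, hy4⟩ := hg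
  obtain ⟨hh1, hh2, z, hz1, hz2, hz3, hz4⟩ := hh
  refine ⟨by rw [mul_assoc, hh1], by rw [← mul_assoc, hg2], z * y,
    by rw [mul_assoc, hy1], by rw [← mul_assoc, hz2], ?_, ?_⟩
  · rw [mul_assoc, ← mul_assoc h z y, hz3, hy2, hy3]
  · rw [mul_assoc, ← mul_assoc y g h, hy4, hh2, hz4]

theorem st9co_mul {e x y : X} (hx : x ∈ HeCoideal X e) (hy : y ∈ HeCoideal X e) :
    x * y ∈ HeCoideal X e := by
  obtain ⟨hxc, hxm⟩ := hx
  obtain ⟨hyc, hym⟩ := hy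
  constructor
  · rw [mul_assoc, hyc, ← mul_assoc, hxc, mul_assoc]
  · have h1 : (x * y) * e = (x * e) * (y * e) := by
      rw [mul_assoc x y e]
      conv_lhs => rw [← hym.2.1]
      rw [← mul_assoc]
    rw [h1]
    exact st9H_mul hxm hym

end St9Aux

theorem statement9 (X : Type u) [Semigroup X] (hX : IdeallyTzSClosed X) :
    (∀ S : Set (slCon X).Quotient, S.Nonempty →
        ∃ a ∈ S, ∀ b ∈ S, b * a = b → b = a) ∧
    (∀ S : Set X, S ⊆ viableIdems X → S.Nonempty →
        ∃ a ∈ S, ∀ b ∈ S, (b * a = b ∧ a * b = b) → b = a) := by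
  classical
  constructor
  · -- well-foundedness of the semilattice reflection
    intro S hS
    by_contra hmin
    push_neg at hmin
    obtain ⟨a0, ha0⟩ := hS
    choose f hf1 hf2 hf3 using hmin
    let g : ℕ → {a : (slCon X).Quotient // a ∈ S} := fun n =>
      Nat.rec ⟨a0, ha0⟩ (fun _ p => ⟨f p.1 p.2, hf1 p.1 p.2⟩) n
    let b : ℕ → (slCon X).Quotient := fun n => (g n).1
    have hstep1 : ∀ n, b (n + 1) * b n = b (n + 1) := fun n => hf2 (g n).1 (g n).2
    have hstep2 : ∀ n, b (n + 1) ≠ b n := fun n => hf3 (g n).1 (g n).2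
    have hchain : ∀ m n, n < m → b m * b n = b m ∧ b m ≠ b n := by
      intro m
      induction m with
      | zero => intro n hn; exact absurd hn (Nat.not_lt_zero n)
      | succ m ih =>
        intro n hn
        rcases Nat.lt_succ_iff_lt_or_eq.1 hn with h | rfl
        · obtain ⟨h1, h2⟩ := ih n h
          refine ⟨st9L_trans (hstep1 m) h1, ?_⟩
          intro he
          have hs := hstep1 m
          rw [he] at hs
          exact h2 (st9L_anti h1 hs)
        · exact ⟨hstep1 n, hstep2 n⟩
    let Df : ℕ → Set X := fun n => {x | b n * (x : (slCon X).Quotient) = b n}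
    have hA : ∀ n (x y : X), x * y ∈ Df n ↔ x ∈ Df n ∧ y ∈ Df n := by
      intro n x y
      show b n * ((x * y : X) : (slCon X).Quotient) = b n ↔ _
      rw [Con.coe_mul]
      exact st9L_meet
    have hB : ∀ n m, n ≤ m → Df n ⊆ Df m := by
      intro n m hnm x hx
      rcases Nat.lt_or_ge n m with h | h
      · exact st9L_trans (hchain m n h).1 hx
      · obtain rfl : n = m := le_antisymm hnm h
        exact hx
    have hWit : ∀ m, ∃ x ∈ Df m, ∀ n < m, x ∉ Df n := by
      intro m
      obtain ⟨x, hx⟩ : ∃ x : X, (x : (slCon X).Quotient) = b m :=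
        Con.induction_on (b m) fun x => ⟨x, rfl⟩
      refine ⟨x, ?_, ?_⟩
      · show b m * (x : (slCon X).Quotient) = b m
        rw [hx]
        exact st9L_idem (b m)
      · intro n hn hmem
        have hmem' : b n * b m = b n := by
          rw [← hx]
          exact hmem
        exact (hchain m n hn).2 (st9L_anti (hchain m n hn).1 hmem')
    exact st9contra Df hA hB hWit (hX (st9I Df) (st9I_ideal Df hA))
  · -- well-foundedness of the poset of viable idempotents
    intro S hSsub hS
    by_contra hmin
    push_neg at hmin
    obtain ⟨a0, ha0⟩ := hS
    choose f hf1 hf2 hf3 using hmin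
    let g : ℕ → {a : X // a ∈ S} := fun n =>
      Nat.rec ⟨a0, ha0⟩ (fun _ p => ⟨f p.1 p.2, hf1 p.1 p.2⟩) n
    let e : ℕ → X := fun n => (g n).1
    have hviable : ∀ n, e n ∈ viableIdems X := fun n => hSsub (g n).2
    have hidem : ∀ n, e n * e n = e n := fun n => (hviable n).1
    have hVI : ∀ n, IsIdealSet X (Set.univ \ HeCoideal X (e n)) := fun n => (hviable n).2
    have hstep1 : ∀ n, e (n + 1) * e n = e (n + 1) ∧ e n * e (n + 1) = e (n + 1) :=
      fun n => hf2 (g n).1 (g n).2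
    have hstep2 : ∀ n, e (n + 1) ≠ e n := fun n => hf3 (g n).1 (g n).2
    have hchain : ∀ m n, n < m → (e m * e n = e m ∧ e n * e m = e m) ∧ e m ≠ e n := by
      intro m
      induction m with
      | zero => intro n hn; exact absurd hn (Nat.not_lt_zero n)
      | succ m ih =>
        intro n hn
        rcases Nat.lt_succ_iff_lt_or_eq.1 hn with h | rfl
        · obtain ⟨⟨h1, h2⟩, h3⟩ := ih n h
          obtain ⟨s1, s2⟩ := hstep1 m
          refine ⟨⟨?_, ?_⟩, ?_⟩
          · calc e (m + 1) * e n = e (m + 1) * e m * e n := by rw [s1]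
              _ = e (m + 1) * (e m * e n) := mul_assoc _ _ _
              _ = e (m + 1) * e m := by rw [h1]
              _ = e (m + 1) := s1
          · calc e n * e (m + 1) = e n * (e m * e (m + 1)) := by rw [s2]
              _ = e n * e m * e (m + 1) := (mul_assoc _ _ _).symm
              _ = e m * e (m + 1) := by rw [h2]
              _ = e (m + 1) := s2
          · intro heq
            rw [heq] at s1
            exact h3 (s1.symm.trans h2).symm
        · exact ⟨hstep1 n, hstep2 n⟩
    let Df : ℕ → Set X := fun n => HeCoideal X (e n)
    have hA : ∀ n (x y : X), x * y ∈ Df n ↔ x ∈ Df n ∧ y ∈ Df n := by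
      intro n x y
      constructor
      · intro hxy
        constructor
        · by_contra hx
          exact ((hVI n) x ⟨trivial, hx⟩ y).1.2 hxy
        · by_contra hy
          exact ((hVI n) y ⟨trivial, hy⟩ x).2.2 hxy
      · rintro ⟨hx, hy⟩
        exact st9co_mul hx hy
    have hB : ∀ n m, n ≤ m → Df n ⊆ Df m := by
      intro n m hnm x hx
      rcases eq_or_lt_of_le hnm with rfl | h
      · exact hx
      · by_contra hxm
        obtain ⟨hxc, hxmem⟩ := hx
        obtain ⟨h1, h2, w, hw1, hw2, hw3, hw4⟩ := hxmem
        have hxw : x * w = e n := by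
          rw [← hw2, ← mul_assoc]
          exact hw3
        have hen : e n ∈ Df m := by
          obtain ⟨⟨c1, c2⟩, -⟩ := hchain m n h
          refine ⟨?_, ?_⟩
          · show e n * e m = e m * e n
            rw [c2, c1]
          · show e n * e m ∈ maxSubgroup X (e m)
            rw [c2]
            exact st9H_self (hidem m)
        rw [← hxw] at hen
        exact ((hVI m) x ⟨trivial, hxm⟩ w).1.2 hen
    have hWit : ∀ m, ∃ x ∈ Df m, ∀ n < m, x ∉ Df n := by
      intro m
      refine ⟨e m, ⟨rfl, ?_⟩, ?_⟩
      · show e m * e m ∈ maxSubgroup X (e m)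
        rw [hidem m]
        exact st9H_self (hidem m)
      · intro n hn hmem
        obtain ⟨⟨c1, c2⟩, hne⟩ := hchain m n hn
        obtain ⟨hc, hm2⟩ := hmem
        rw [c1] at hm2
        obtain ⟨k1, k2, w, hw1, hw2, hw3, hw4⟩ := hm2
        apply hne
        calc e m = e m * e n := c1.symm
          _ = e m * (e m * w) := by rw [hw3]
          _ = e m * e m * w := (mul_assoc _ _ _).symm
          _ = e m * w := by rw [hidem m]
          _ = e n := hw3
    exact st9contra Df hA hB hWit (hX (st9I Df) (st9I_ideal Df hA))
end

section
/- If a semigroup X is projectively TzS-closed and projectively TzS-discrete, then the semilattice reflection X/⇕ and the set VE(X) of viable idempotents are finite. -/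
universe u

open Set TopologicalSpace

section Aux

variable {X : Type*} [Semigroup X]

theorem slCon_isSemilatticeCon : IsSemilatticeCon (slCon X) := by
  constructor
  · intro a b
    induction a using Quotient.ind
    induction b using Quotient.ind
    rename_i x y
    show ((x * y : X) : (slCon X).Quotient) = ((y * x : X) : (slCon X).Quotient)
    refine (Con.eq _).2 (fun c hc => (Con.eq _).1 ?_)
    show ((x * y : X) : c.Quotient) = ((y * x : X) : c.Quotient)
    rw [Con.coe_mul, Con.coe_mul, hc.1]
  · intro a
    induction a using Quotient.ind
    rename_i x
    show ((x * x : X) : (slCon X).Quotient) = ((x : X) : (slCon X).Quotient)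
    refine (Con.eq _).2 (fun c hc => (Con.eq _).1 ?_)
    show ((x * x : X) : c.Quotient) = ((x : X) : c.Quotient)
    rw [Con.coe_mul]; exact hc.2 _

theorem maxSubgroup_mul_mem' {e a b : X} (ha : a ∈ maxSubgroup X e)
    (hb : b ∈ maxSubgroup X e) : a * b ∈ maxSubgroup X e := by
  obtain ⟨ha1, ha2, a', ha1', ha2', ha3', ha4'⟩ := ha
  obtain ⟨hb1, hb2, b', hb1', hb2', hb3', hb4'⟩ := hb
  refine ⟨by rw [mul_assoc, hb1], by rw [← mul_assoc, ha2], b' * a', by rw [mul_assoc, ha1'],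
    by rw [← mul_assoc, hb2'], ?_, ?_⟩
  · have h : a * b * (b' * a') = a * (b * b') * a' := by simp only [mul_assoc]
    rw [h, hb3', ha1, ha3']
  · have h : b' * a' * (a * b) = b' * (a' * a) * b := by simp only [mul_assoc]
    rw [h, ha4', hb1', hb4']

theorem idem_of_maxSubgroup {e z : X} (hz : z ∈ maxSubgroup X e) (h : z * z = z) : z = e := by
  obtain ⟨hz1, _hz2, y, _hy1, _hy2, hy3, _hy4⟩ := hz
  calc z = z * e := hz1.symm
    _ = z * (z * y) := by rw [hy3]
    _ = z * z * y := (mul_assoc ..).symm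
    _ = z * y := by rw [h]
    _ = e := hy3

theorem e_mem_HeCoideal {e : X} (he : e ∈ idemSet X) : e ∈ HeCoideal X e := by
  have h : e * e = e := he
  refine ⟨rfl, ?_⟩
  show e * e ∈ maxSubgroup X e
  rw [h]
  exact ⟨h, h, e, h, h, h, h⟩

theorem HeCoideal_mul_iff {e : X} (he : e ∈ viableIdems X) (x y : X) :
    x * y ∈ HeCoideal X e ↔ x ∈ HeCoideal X e ∧ y ∈ HeCoideal X e := by
  obtain ⟨_, hI⟩ := he
  constructor
  · intro h
    constructor
    · by_contra hx
      exact (hI x ⟨trivial, hx⟩ y).1.2 h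
    · by_contra hy
      exact (hI y ⟨trivial, hy⟩ x).2.2 h
  · rintro ⟨⟨hx1, hx2⟩, ⟨hy1, hy2⟩⟩
    have hye : e * (y * e) = y * e := hy2.2.1
    have hxe : x * e * e = x * e := hx2.1
    have key : x * y * e = (x * e) * (y * e) := by
      calc x * y * e = x * (y * e) := mul_assoc ..
        _ = x * (e * (y * e)) := by rw [hye]
        _ = (x * e) * (y * e) := by rw [← mul_assoc]
    have key2 : e * (x * y) = (x * e) * (y * e) := by
      calc e * (x * y) = (e * x) * y := (mul_assoc ..).symm
        _ = (x * e) * y := by rw [hx1]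
        _ = ((x * e) * e) * y := by rw [hxe]
        _ = (x * e) * (e * y) := by rw [mul_assoc]
        _ = (x * e) * (y * e) := by rw [hy1]
    exact ⟨by rw [key, key2], key ▸ maxSubgroup_mul_mem' hx2 hy2⟩

/-- The kernel congruence of the characteristic function of `H_e/e`. -/
def coidealCon {e : X} (he : e ∈ viableIdems X) : Con X where
  r x y := x ∈ HeCoideal X e ↔ y ∈ HeCoideal X e
  iseqv := ⟨fun _ => Iff.rfl, Iff.symm, Iff.trans⟩
  mul' := fun {w x y z} h1 h2 => by
    have h1' : w ∈ HeCoideal X e ↔ x ∈ HeCoideal X e := h1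
    have h2' : y ∈ HeCoideal X e ↔ z ∈ HeCoideal X e := h2
    show w * y ∈ HeCoideal X e ↔ x * z ∈ HeCoideal X e
    rw [HeCoideal_mul_iff he, HeCoideal_mul_iff he, h1', h2']

theorem coidealCon_isSemilatticeCon {e : X} (he : e ∈ viableIdems X) :
    IsSemilatticeCon (coidealCon he) := by
  constructor
  · intro a b
    induction a using Quotient.ind
    induction b using Quotient.ind
    rename_i x y
    show ((x * y : X) : (coidealCon he).Quotient) = ((y * x : X) : _)
    refine (Con.eq _).2 ?_
    show x * y ∈ HeCoideal X e ↔ y * x ∈ HeCoideal X e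
    rw [HeCoideal_mul_iff he, HeCoideal_mul_iff he, and_comm]
  · intro a
    induction a using Quotient.ind
    rename_i x
    show ((x * x : X) : (coidealCon he).Quotient) = ((x : X) : _)
    refine (Con.eq _).2 ?_
    show x * x ∈ HeCoideal X e ↔ x ∈ HeCoideal X e
    rw [HeCoideal_mul_iff he, and_self]

theorem viable_eq_of_slCon {e f : X} (he : e ∈ viableIdems X) (hf : f ∈ viableIdems X)
    (h : slCon X e f) : e = f := by
  have hee : e * e = e := he.1
  have hff : f * f = f := hf.1
  have hfe : f ∈ HeCoideal X e := (h (coidealCon he) (coidealCon_isSemilatticeCon he)).1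
    (e_mem_HeCoideal he.1)
  have hef : e ∈ HeCoideal X f := (h (coidealCon hf) (coidealCon_isSemilatticeCon hf)).2
    (e_mem_HeCoideal hf.1)
  obtain ⟨hc, hm⟩ := hfe
  obtain ⟨hc', hm'⟩ := hef
  have hidem : (f * e) * (f * e) = f * e := by
    calc (f * e) * (f * e) = (f * e) * (e * f) := by rw [hc]
      _ = f * (e * (e * f)) := by simp only [mul_assoc]
      _ = f * ((e * e) * f) := by rw [← mul_assoc e e f]
      _ = f * (e * f) := by rw [hee]
      _ = f * (f * e) := by rw [hc]
      _ = (f * f) * e := by rw [← mul_assoc]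
      _ = f * e := by rw [hff]
  have h1 : f * e = e := idem_of_maxSubgroup hm hidem
  have hidem' : (e * f) * (e * f) = e * f := by rw [hc']; exact hidem
  have h2 : e * f = f := idem_of_maxSubgroup hm' hidem'
  calc e = f * e := h1.symm
    _ = e * f := hc'.symm
    _ = f := h2

/-- Homomorphisms to `Bool` separating the points of the semilattice quotient. -/
noncomputable def slSep (s : (slCon X).Quotient) : (slCon X).Quotient →ₙ* Bool where
  toFun t := @decide (s * t = s) (Classical.propDecidable _)
  map_mul' t u := by
    have hcomm := (slCon_isSemilatticeCon (X := X)).1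
    have hidem := (slCon_isSemilatticeCon (X := X)).2
    have key : s * (t * u) = s ↔ (s * t = s ∧ s * u = s) := by
      constructor
      · intro h
        constructor
        · calc s * t = s * (t * u) * t := by rw [h]
            _ = s * (t * (u * t)) := by simp only [mul_assoc]
            _ = s * (t * (t * u)) := by rw [hcomm u t]
            _ = s * ((t * t) * u) := by simp only [mul_assoc]
            _ = s * (t * u) := by rw [hidem t]
            _ = s := h
        · calc s * u = s * (t * u) * u := by rw [h]
            _ = s * (t * (u * u)) := by simp only [mul_assoc]
            _ = s * (t * u) := by rw [hidem u]
            _ = s := h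
      · rintro ⟨h1, h2⟩
        rw [← mul_assoc, h1, h2]
    show _ = (_ * _ : Bool)
    by_cases ht : s * t = s <;> by_cases hu : s * u = s <;>
      simp [ht, hu, key, show ∀ a b : Bool, a * b = (a && b) from fun _ _ => rfl]

end Aux

theorem statement11 (X : Type u) [Semigroup X]
    (h1 : ProjectivelyTzSClosed X) (h2 : ProjectivelyTzSDiscrete X) :
    Finite (slCon X).Quotient ∧ (viableIdems X).Finite := by
  classical
  set S := (slCon X).Quotient with hS
  let Y : Type u := (S →ₙ* Bool) → Bool
  haveI : ContinuousMul Bool := ⟨continuous_of_discreteTopology⟩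
  haveI : CompactSpace Y := by infer_instance
  have hbasis : HasClopenBasis Y :=
    ⟨{s | IsClopen s}, fun s hs => hs, isTopologicalBasis_isClopen⟩
  let j : S →ₙ* Y :=
    { toFun := fun s f => f s
      map_mul' := fun s t => by funext f; exact f.map_mul s t }
  have hjinj : Function.Injective j := by
    intro s t h
    have h' : ∀ f : S →ₙ* Bool, f s = f t := fun f => congrFun h f
    have hcomm := (slCon_isSemilatticeCon (X := X)).1
    have hidem := (slCon_isSemilatticeCon (X := X)).2
    have h1' : s * t = s := by
      have hst := (h' (slSep s)).symm
      by_contra hne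
      simp only [slSep, MulHom.coe_mk, hidem s, decide_eq_decide] at hst
      exact hne (hst.2 trivial)
    have h2' : t * s = t := by
      have hts := h' (slSep t)
      by_contra hne
      simp only [slSep, MulHom.coe_mk, hidem t, decide_eq_decide] at hts
      exact hne (hts.2 trivial)
    rw [← h1', hcomm s t, h2']
  let q : X →ₙ* S := { toFun := fun x => (x : S), map_mul' := fun _ _ => rfl }
  have hqsurj : Function.Surjective q := fun a => Quotient.inductionOn a (fun x => ⟨x, rfl⟩)
  have hrange : Set.range (j.comp q) = Set.range j := by
    ext y
    constructor
    · rintro ⟨x, rfl⟩; exact ⟨q x, rfl⟩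
    · rintro ⟨s, rfl⟩; obtain ⟨x, rfl⟩ := hqsurj s; exact ⟨x, rfl⟩
  haveI hdisc : DiscreteTopology (Set.range j) := by
    have := h2 Y hbasis (j.comp q)
    rwa [hrange] at this
  have hclosed : IsClosed (Set.range j) := h1 (slCon X) Y hbasis j hjinj hdisc
  have hfin : (Set.range j).Finite := hclosed.isCompact.finite (isDiscrete_iff_discreteTopology.mpr hdisc)
  have hSfin : Finite S := by
    haveI := hfin.to_subtype
    exact Finite.of_injective (Set.rangeFactorization j)
      (fun a b hab => hjinj (congrArg Subtype.val hab))
  refine ⟨hSfin, ?_⟩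
  have hinj : Set.InjOn (fun x : X => (x : S)) (viableIdems X) := by
    intro e he f hf h
    exact viable_eq_of_slCon he hf ((Con.eq _).1 h)
  exact Set.Finite.of_finite_image (Set.toFinite _) hinj
end
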